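/- Let m₁, m₂, ν₁, ν₂ > 0 satisfy m₁ + ν₁ ≥ m₂ + ν₂ and m₁/ν₁ ≥ m₂/ν₂. Then for all u > 0 and 0 < w < 1, h(u,w) ≤ K₀ · u^{(m₁+m₂)/2−1} · w^{m₁/2−1} · (1−w)^{m₂/2−1} · (1 + m₂u/ν₂)^{−(m₂+ν₂)/2}, where h(u,w) = K₀ · u^{(m₁+m₂)/2−1} · w^{m₁/2−1} · (1−w)^{m₂/2−1} · (1 + m₁uw/ν₁)^{−(m₁+ν₁)/2} · (1 + m₂u(1−w)/ν₂)^{−(m₂+ν₂)/2}. -/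
import Mathlib


open Real MeasureTheory Set

/-- Beta function `B(a,b) = Γ(a)Γ(b)/Γ(a+b)`. -/
noncomputable def Beta (a b : ℝ) : ℝ := Gamma a * Gamma b / Gamma (a + b)

/-- The normalizing constant `K₀`. -/
noncomputable def K₀ (m₁ m₂ ν₁ ν₂ : ℝ) : ℝ :=
  (m₁ / ν₁) ^ (m₁ / 2) * (m₂ / ν₂) ^ (m₂ / 2) /
    (Beta (m₁ / 2) (ν₁ / 2) * Beta (m₂ / 2) (ν₂ / 2))

/-- Upper bound on the joint density `h(u,w)`:  if `m₁ + ν₁ ≥ m₂ + ν₂` and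
`m₁/ν₁ ≥ m₂/ν₂`, then for `u > 0` and `0 < w < 1`,
`h(u,w) ≤ K₀ u^{(m₁+m₂)/2−1} w^{m₁/2−1} (1−w)^{m₂/2−1} (1 + m₂u/ν₂)^{−(m₂+ν₂)/2}`. -/
theorem hDens_upper_bound (m₁ m₂ ν₁ ν₂ : ℝ)
    (hm₁ : 0 < m₁) (hm₂ : 0 < m₂) (hν₁ : 0 < ν₁) (hν₂ : 0 < ν₂)
    (hsum : m₂ + ν₂ ≤ m₁ + ν₁) (hratio : m₂ / ν₂ ≤ m₁ / ν₁)
    (u w : ℝ) (hu : 0 < u) (hw0 : 0 < w) (hw1 : w < 1) :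
    K₀ m₁ m₂ ν₁ ν₂ * u ^ ((m₁ + m₂) / 2 - 1) * w ^ (m₁ / 2 - 1) * (1 - w) ^ (m₂ / 2 - 1) *
        (1 + m₁ * u * w / ν₁) ^ (-(m₁ + ν₁) / 2) *
        (1 + m₂ * u * (1 - w) / ν₂) ^ (-(m₂ + ν₂) / 2) ≤
      K₀ m₁ m₂ ν₁ ν₂ * u ^ ((m₁ + m₂) / 2 - 1) * w ^ (m₁ / 2 - 1) * (1 - w) ^ (m₂ / 2 - 1) *
        (1 + m₂ * u / ν₂) ^ (-(m₂ + ν₂) / 2) := by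
  have hw1' : 0 < 1 - w := by linarith
  have hK : 0 ≤ K₀ m₁ m₂ ν₁ ν₂ := by
    unfold K₀ Beta
    have g1 := Real.Gamma_pos_of_pos (by linarith : (0:ℝ) < m₁ / 2)
    have g2 := Real.Gamma_pos_of_pos (by linarith : (0:ℝ) < ν₁ / 2)
    have g3 := Real.Gamma_pos_of_pos (by linarith : (0:ℝ) < m₂ / 2)
    have g4 := Real.Gamma_pos_of_pos (by linarith : (0:ℝ) < ν₂ / 2)
    have g5 := Real.Gamma_pos_of_pos (by linarith : (0:ℝ) < m₁ / 2 + ν₁ / 2)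
    have g6 := Real.Gamma_pos_of_pos (by linarith : (0:ℝ) < m₂ / 2 + ν₂ / 2)
    positivity
  have hA : 0 ≤ K₀ m₁ m₂ ν₁ ν₂ * u ^ ((m₁ + m₂) / 2 - 1) * w ^ (m₁ / 2 - 1) *
      (1 - w) ^ (m₂ / 2 - 1) := by positivity
  set p := (m₁ + ν₁) / 2 with hp
  set q := (m₂ + ν₂) / 2 with hq'
  have hq : 0 < q := by rw [hq']; linarith
  have hpq : q ≤ p := by rw [hp, hq']; linarith
  set a := 1 + m₁ * u * w / ν₁ with ha'
  set b := 1 + m₂ * u * (1 - w) / ν₂ with hb'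
  set c := 1 + m₂ * u / ν₂ with hc'
  have hx : 0 ≤ m₂ * u * w / ν₂ := by positivity
  have hy : 0 ≤ m₂ * u * (1 - w) / ν₂ := by positivity
  have ha : 1 ≤ a := by rw [ha']; have : 0 ≤ m₁ * u * w / ν₁ := by positivity
                        linarith
  have hb : 1 ≤ b := by rw [hb']; linarith
  have hc : 1 ≤ c := by rw [hc']; have : 0 ≤ m₂ * u / ν₂ := by positivity
                        linarith
  have h1 : 1 + m₂ * u * w / ν₂ ≤ a := by
    rw [ha']
    have : m₂ / ν₂ * (u * w) ≤ m₁ / ν₁ * (u * w) :=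
      mul_le_mul_of_nonneg_right hratio (by positivity)
    have e1 : m₂ * u * w / ν₂ = m₂ / ν₂ * (u * w) := by ring
    have e2 : m₁ * u * w / ν₁ = m₁ / ν₁ * (u * w) := by ring
    linarith [this, e1.le, e2.ge]
  have h2 : c ≤ (1 + m₂ * u * w / ν₂) * b := by
    rw [hc', hb']
    have hxy : m₂ * u * w / ν₂ + m₂ * u * (1 - w) / ν₂ = m₂ * u / ν₂ := by ring
    nlinarith [mul_nonneg hx hy, hxy]
  have key : c ^ q ≤ a ^ p * b ^ q := by
    calc c ^ q ≤ ((1 + m₂ * u * w / ν₂) * b) ^ q :=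
          Real.rpow_le_rpow (by linarith) h2 hq.le
      _ = (1 + m₂ * u * w / ν₂) ^ q * b ^ q :=
          Real.mul_rpow (by linarith) (by linarith)
      _ ≤ a ^ q * b ^ q :=
          mul_le_mul_of_nonneg_right (Real.rpow_le_rpow (by linarith) h1 hq.le)
            (Real.rpow_nonneg (by linarith) q)
      _ ≤ a ^ p * b ^ q :=
          mul_le_mul_of_nonneg_right (Real.rpow_le_rpow_of_exponent_le ha hpq)
            (Real.rpow_nonneg (by linarith) q)
  have hcq : 0 < c ^ q := Real.rpow_pos_of_pos (by linarith) q
  have hmain : a ^ (-p) * b ^ (-q) ≤ c ^ (-q) := by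
    rw [Real.rpow_neg (by linarith), Real.rpow_neg (by linarith),
      Real.rpow_neg (by linarith), ← mul_inv]
    exact inv_anti₀ hcq key
  have ep : -(m₁ + ν₁) / 2 = -p := by rw [hp]; ring
  have eq : -(m₂ + ν₂) / 2 = -q := by rw [hq']; ring
  rw [ep, eq, mul_assoc]
  exact mul_le_mul_of_nonneg_left hmain hA
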